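/- Let q : Q → ℙ¹ be a quadric fibration with a sub-ℙ¹×ℙ¹ boundary: suppose D_h ≅ F₀, D_f a fiber, −K_Q ∼ 2D_h + aD_f, with the adjunction D_h|_{D_h} ∼ −K_{D_h} − a·D_f|_{D_h}. Then D_h³ = 8 − 4a and (−K_Q)³ = 64 − 8a; in particular if (−K_Q)³ = 40 then a = 3 and −K_Q ∼ 2D_h + 3D_f. -/

import Mathlib

/-- An abstract model of the relevant intersection theory on a quadric fibration
`q : Q → ℙ¹` with a fiber `D_f` and a divisor `D_h ≅ ℙ¹ × ℙ¹`: the group `Div` of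
divisor classes on `Q` (so linear equivalence is equality), the group `SDiv` of
divisor classes on the surface `D_h` with its intersection pairing `dot`, the triple
intersection form `inter` on `Q`, the restriction map to `D_h`, and the canonical
classes.  The hypothesis fields record the geometric input listed in the statement:
`D_f` is a fiber (`D_f² ≡ 0`), adjunction `D_h|_{D_h} ∼ −K_{D_h} − a·D_f|_{D_h}`,
`−K_Q ∼ 2D_h + aD_f`, the intersection numbers `K_{D_h}² = 8`,
`(K_{D_h}·D_f|_{D_h}) = −2`, `(D_f|_{D_h})² = 0` on `D_h ≅ ℙ¹×ℙ¹`, and the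
compatibility `(A·B·D_h)_Q = (A|_{D_h} · B|_{D_h})_{D_h}`. -/
structure Setup where
  /-- divisor classes on the 3-fold `Q` -/
  Div : AddCommGrpCat
  /-- divisor classes on the surface `D_h` -/
  SDiv : AddCommGrpCat
  /-- the triple intersection form on `Q` -/
  inter : Div →+ Div →+ Div →+ ℤ
  /-- the intersection pairing on `D_h` -/
  dot : SDiv →+ SDiv →+ ℤ
  /-- restriction of divisors to `D_h` -/
  restrict : Div →+ SDiv
  /-- the class of `D_h` -/
  Dh : Div
  /-- the class of the fiber `D_f` -/
  Df : Div
  /-- the canonical class `K_Q` -/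
  K : Div
  /-- the canonical class `K_{D_h}` of `D_h ≅ ℙ¹ × ℙ¹` -/
  KDh : SDiv
  a : ℤ
  /-- symmetry of the intersection form -/
  inter_comm : ∀ A B C : Div, inter A B C = inter B A C ∧ inter A B C = inter A C B
  /-- `−K_Q ∼ 2D_h + a·D_f` -/
  hK : -K = (2 : ℤ) • Dh + a • Df
  /-- adjunction: `D_h|_{D_h} ∼ −K_{D_h} − a·D_f|_{D_h}` -/
  hadj : restrict Dh = -KDh - a • restrict Df
  /-- `K_{D_h}² = 8` on `D_h ≅ ℙ¹ × ℙ¹` -/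
  hKK : dot KDh KDh = 8
  /-- `(K_{D_h} · D_f|_{D_h}) = −2` since `D_f|_{D_h} ∼ f₀` -/
  hKf : dot KDh (restrict Df) = -2
  /-- `(D_f|_{D_h})² = 0` -/
  hff : dot (restrict Df) (restrict Df) = 0
  /-- compatibility: `(A · B · D_h)_Q = (A|_{D_h} · B|_{D_h})_{D_h}` -/
  hcompat : ∀ A B : Div, inter A B Dh = dot (restrict A) (restrict B)
  /-- `D_f` is a fiber: `(D_f · D_f · A) = 0` for every `A` -/
  hfiber : ∀ A : Div, inter Df Df A = 0

/-- With the above data: `D_h³ = 8 − 4a` and `(−K_Q)³ = 64 − 8a`; in particular, if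
`(−K_Q)³ = 40` then `a = 3` and `−K_Q ∼ 2D_h + 3D_f`. -/
theorem stmt16 (S : Setup) :
    S.inter S.Dh S.Dh S.Dh = 8 - 4 * S.a ∧
    S.inter (-S.K) (-S.K) (-S.K) = 64 - 8 * S.a ∧
    (S.inter (-S.K) (-S.K) (-S.K) = 40 →
      S.a = 3 ∧ -S.K = (2 : ℤ) • S.Dh + (3 : ℤ) • S.Df) := by

  have s1 : ∀ A B C, S.inter A B C = S.inter B A C := fun A B C => (S.inter_comm A B C).1
  have s2 : ∀ A B C, S.inter A B C = S.inter A C B := fun A B C => (S.inter_comm A B C).2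
  have hKDh : S.KDh = S.restrict (-S.Dh - S.a • S.Df) := by
    have h := S.hadj
    simp only [map_sub, map_neg, map_zsmul]
    rw [h]; abel
  -- dot of Df with KDh
  have hfK : S.dot (S.restrict S.Df) S.KDh = -2 := by
    rw [hKDh, ← S.hcompat, s1, S.hcompat, ← hKDh, S.hKf]
  have hDhDf : S.dot (S.restrict S.Dh) (S.restrict S.Df) = 2 := by
    rw [S.hadj]
    simp only [AddMonoidHom.sub_apply, AddMonoidHom.neg_apply, map_sub, map_neg, map_zsmul,
      AddMonoidHom.smul_apply, S.hKf, S.hff, smul_eq_mul]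
    ring
  have hDhDh : S.dot (S.restrict S.Dh) (S.restrict S.Dh) = 8 - 4 * S.a := by
    rw [S.hadj]
    simp only [AddMonoidHom.sub_apply, AddMonoidHom.neg_apply, map_sub, map_neg, map_zsmul,
      AddMonoidHom.smul_apply, S.hKK, S.hKf, S.hff, smul_eq_mul, hfK]
    ring
  have h3 : S.inter S.Dh S.Dh S.Dh = 8 - 4 * S.a := by rw [S.hcompat, hDhDh]
  have h2 : S.inter S.Dh S.Df S.Dh = 2 := by rw [S.hcompat, hDhDf]
  have h2a : S.inter S.Dh S.Dh S.Df = 2 := by rw [s2, h2]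
  have h2b : S.inter S.Df S.Dh S.Dh = 2 := by rw [s1, h2]
  have h2c : S.inter S.Dh S.Df S.Df = 0 := by rw [s1, s2, S.hfiber]
  have h2d : S.inter S.Df S.Dh S.Df = 0 := by rw [s2, s1]; exact S.hfiber _
  have hcube : S.inter (-S.K) (-S.K) (-S.K) = 64 - 8 * S.a := by
    rw [S.hK]
    simp only [map_add, map_zsmul, AddMonoidHom.add_apply, AddMonoidHom.smul_apply,
      smul_eq_mul, h3, h2, h2a, h2b, h2c, h2d, S.hfiber]
    ring
  refine ⟨h3, hcube, fun h40 => ?_⟩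
  have ha : S.a = 3 := by rw [hcube] at h40; linarith
  exact ⟨ha, by rw [S.hK, ha]⟩
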